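/- Consider the reference square K̂ = [−1,1]² with vertices (±1,±1), the bubble b(x,y) = (1−x²)(1−y²), and the 20-dimensional space W̃* = P₃ ⊕ span{x³y, xy³} ⊕ span{b·φ : φ ∈ {x, y, x²y, xy², x⁴, y⁴, x³y, xy³}}. If v ∈ W̃* satisfies the 20 conditions: v vanishes at the four vertices; both partial derivatives ∂v/∂x and ∂v/∂y vanish at the four vertices; ∫₋₁¹ (∂v/∂y)(x,−1) dx = ∫₋₁¹ (∂v/∂y)(x,1) dx = ∫₋₁¹ (∂v/∂x)(−1,y) dy = ∫₋₁¹ (∂v/∂x)(1,y) dy = 0; and ∫₋₁¹ (∂v/∂y)(x,−1)·x dx = ∫₋₁¹ (∂v/∂y)(x,1)·x dx = ∫₋₁¹ (∂v/∂x)(−1,y)·y dy = ∫₋₁¹ (∂v/∂x)(1,y)·y dy = 0, then v is the zero polynomial. -/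

import Mathlib

set_option maxHeartbeats 1000000

open MvPolynomial

lemma fin2_sum (d : Fin 2 →₀ ℕ) : d = Finsupp.single 0 (d 0) + Finsupp.single 1 (d 1) := by
  ext k; fin_cases k <;> simp [Finsupp.single_apply]

lemma fin2_degsum (e : Fin 2 →₀ ℕ) : ∑ i ∈ e.support, e i = e 0 + e 1 := by
  rw [Finset.sum_subset (Finset.subset_univ _)
    (fun x _ hx => Finsupp.notMem_support_iff.mp hx)]
  simp [Fin.sum_univ_two]

lemma mono_CX (i j : ℕ) (a : ℝ) :
    (monomial (Finsupp.single (0:Fin 2) i + Finsupp.single 1 j) a : MvPolynomial (Fin 2) ℝ)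
      = C a * X 0 ^ i * X 1 ^ j := by
  rw [X_pow_eq_monomial, X_pow_eq_monomial, C_mul_monomial, monomial_mul]
  simp

lemma decomp3 (p : MvPolynomial (Fin 2) ℝ) (hp : p.totalDegree ≤ 3) :
    ∃ a00 a10 a01 a20 a11 a02 a30 a21 a12 a03 : ℝ,
      p = C a00 + C a10 * X 0 + C a01 * X 1 + C a20 * X 0^2 + C a11 * X 0 * X 1 + C a02 * X 1^2
        + C a30 * X 0^3 + C a21 * X 0^2 * X 1 + C a12 * X 0 * X 1^2 + C a03 * X 1^3 := by
  classical
  have key : p =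
      (monomial (Finsupp.single 0 0 + Finsupp.single 1 0)
        (coeff (Finsupp.single 0 0 + Finsupp.single 1 0) p))
    + (monomial (Finsupp.single 0 1 + Finsupp.single 1 0)
        (coeff (Finsupp.single 0 1 + Finsupp.single 1 0) p))
    + (monomial (Finsupp.single 0 0 + Finsupp.single 1 1)
        (coeff (Finsupp.single 0 0 + Finsupp.single 1 1) p))
    + (monomial (Finsupp.single 0 2 + Finsupp.single 1 0)
        (coeff (Finsupp.single 0 2 + Finsupp.single 1 0) p))
    + (monomial (Finsupp.single 0 1 + Finsupp.single 1 1)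
        (coeff (Finsupp.single 0 1 + Finsupp.single 1 1) p))
    + (monomial (Finsupp.single 0 0 + Finsupp.single 1 2)
        (coeff (Finsupp.single 0 0 + Finsupp.single 1 2) p))
    + (monomial (Finsupp.single 0 3 + Finsupp.single 1 0)
        (coeff (Finsupp.single 0 3 + Finsupp.single 1 0) p))
    + (monomial (Finsupp.single 0 2 + Finsupp.single 1 1)
        (coeff (Finsupp.single 0 2 + Finsupp.single 1 1) p))
    + (monomial (Finsupp.single 0 1 + Finsupp.single 1 2)
        (coeff (Finsupp.single 0 1 + Finsupp.single 1 2) p))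
    + (monomial (Finsupp.single 0 0 + Finsupp.single 1 3)
        (coeff (Finsupp.single 0 0 + Finsupp.single 1 3) p)) := by
    ext d
    obtain ⟨m, n, rfl⟩ : ∃ m n, d = Finsupp.single 0 m + Finsupp.single 1 n :=
      ⟨d 0, d 1, fin2_sum d⟩
    by_cases hle : m + n ≤ 3
    · have hm : m ≤ 3 := by omega
      have hn : n ≤ 3 := by omega
      interval_cases m <;> interval_cases n <;>
        first
          | omega
          | simp [coeff_add, coeff_monomial, DFunLike.ext_iff, Fin.forall_fin_two,
              Finsupp.add_apply, Finsupp.single_apply]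
    · have hz : coeff (Finsupp.single (0:Fin 2) m + Finsupp.single 1 n) p = 0 := by
        apply coeff_eq_zero_of_totalDegree_lt
        rw [fin2_degsum]
        simp only [Finsupp.add_apply, Finsupp.single_apply]
        norm_num
        omega
      rw [hz]
      symm
      have hneg : ∀ i j : ℕ, i + j ≤ 3 →
          ¬(Finsupp.single (0:Fin 2) i + Finsupp.single 1 j
            = Finsupp.single 0 m + Finsupp.single 1 n) := by
        intro i j hij h
        have h0 := DFunLike.congr_fun h 0
        have h1 := DFunLike.congr_fun h 1
        simp [Finsupp.single_apply] at h0 h1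
        omega
      simp only [coeff_add, coeff_monomial, if_neg (hneg 0 0 (by norm_num)), if_neg (hneg 1 0 (by norm_num)), if_neg (hneg 0 1 (by norm_num)), if_neg (hneg 2 0 (by norm_num)), if_neg (hneg 1 1 (by norm_num)), if_neg (hneg 0 2 (by norm_num)), if_neg (hneg 3 0 (by norm_num)), if_neg (hneg 2 1 (by norm_num)), if_neg (hneg 1 2 (by norm_num)), if_neg (hneg 0 3 (by norm_num))]
      simp
  refine ⟨coeff (Finsupp.single 0 0 + Finsupp.single 1 0) p,
    coeff (Finsupp.single 0 1 + Finsupp.single 1 0) p,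
    coeff (Finsupp.single 0 0 + Finsupp.single 1 1) p,
    coeff (Finsupp.single 0 2 + Finsupp.single 1 0) p,
    coeff (Finsupp.single 0 1 + Finsupp.single 1 1) p,
    coeff (Finsupp.single 0 0 + Finsupp.single 1 2) p,
    coeff (Finsupp.single 0 3 + Finsupp.single 1 0) p,
    coeff (Finsupp.single 0 2 + Finsupp.single 1 1) p,
    coeff (Finsupp.single 0 1 + Finsupp.single 1 2) p,
    coeff (Finsupp.single 0 0 + Finsupp.single 1 3) p, ?_⟩
  conv_lhs => rw [key]
  rw [mono_CX 0 0, mono_CX 1 0, mono_CX 0 1, mono_CX 2 0, mono_CX 1 1, mono_CX 0 2, mono_CX 3 0, mono_CX 2 1, mono_CX 1 2, mono_CX 0 3]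
  ring

lemma intpoly (e0 e1 e2 e3 e4 e5 e6 e7 : ℝ) :
    (∫ x in (-1:ℝ)..1, (e0 + e1*x + e2*x^2 + e3*x^3 + e4*x^4 + e5*x^5 + e6*x^6 + e7*x^7))
      = 2*e0 + 2/3*e2 + 2/5*e4 + 2/7*e6 := by
  have h : ∀ x ∈ Set.uIcc (-1:ℝ) 1,
      HasDerivAt (fun x : ℝ => e0*x + e1/2*x^2 + e2/3*x^3 + e3/4*x^4 + e4/5*x^5 + e5/6*x^6
        + e6/7*x^7 + e7/8*x^8)
      (e0 + e1*x + e2*x^2 + e3*x^3 + e4*x^4 + e5*x^5 + e6*x^6 + e7*x^7) x := by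
    intro x _
    have h1 := ((hasDerivAt_pow 1 x).const_mul e0).add (((hasDerivAt_pow 2 x).const_mul (e1/2)).add
      (((hasDerivAt_pow 3 x).const_mul (e2/3)).add (((hasDerivAt_pow 4 x).const_mul (e3/4)).add
      (((hasDerivAt_pow 5 x).const_mul (e4/5)).add (((hasDerivAt_pow 6 x).const_mul (e5/6)).add
      (((hasDerivAt_pow 7 x).const_mul (e6/7)).add ((hasDerivAt_pow 8 x).const_mul (e7/8))))))))
    refine (h1.congr_deriv ?_).congr_of_eventuallyEq (Filter.Eventually.of_forall fun y => ?_)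
    · push_cast; ring
    · simp only [Pi.add_apply]; ring
  rw [intervalIntegral.integral_eq_sub_of_hasDerivAt h
    (by apply Continuous.intervalIntegrable; continuity)]
  ring

/-- The bubble `b(x,y) = (1 − x²)(1 − y²)` on the reference square `[−1,1]²`. -/
noncomputable def bub : MvPolynomial (Fin 2) ℝ :=
  (1 - X 0 ^ 2) * (1 - X 1 ^ 2)

/-- Membership in the 20-dimensional auxiliary space
`W̃* = P₃ ⊕ span{x³y, xy³} ⊕ span{b·φ : φ ∈ {x, y, x²y, xy², x⁴, y⁴, x³y, xy³}}`. -/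
def memWtilde (v : MvPolynomial (Fin 2) ℝ) : Prop :=
  ∃ (p : MvPolynomial (Fin 2) ℝ) (c1 c2 d1 d2 d3 d4 d5 d6 d7 d8 : ℝ),
    p.totalDegree ≤ 3 ∧
    v = p + C c1 * X 0 ^ 3 * X 1 + C c2 * X 0 * X 1 ^ 3 +
      bub * (C d1 * X 0 + C d2 * X 1 + C d3 * X 0 ^ 2 * X 1 + C d4 * X 0 * X 1 ^ 2 +
        C d5 * X 0 ^ 4 + C d6 * X 1 ^ 4 + C d7 * X 0 ^ 3 * X 1 + C d8 * X 0 * X 1 ^ 3)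

/-- unisolvency of the 20 degrees of freedom (vertex values,
vertex gradients, edge integrals and first moments of the normal derivative)
of the auxiliary C⁰ nonconforming plate element on the reference square. -/
theorem stmt16 (v : MvPolynomial (Fin 2) ℝ) (hv : memWtilde v)
    (hV1 : eval ![(-1:ℝ), -1] v = 0)
    (hV2 : eval ![(1:ℝ), -1] v = 0)
    (hV3 : eval ![(1:ℝ), 1] v = 0)
    (hV4 : eval ![(-1:ℝ), 1] v = 0)
    (hGx1 : eval ![(-1:ℝ), -1] (pderiv 0 v) = 0)
    (hGx2 : eval ![(1:ℝ), -1] (pderiv 0 v) = 0)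
    (hGx3 : eval ![(1:ℝ), 1] (pderiv 0 v) = 0)
    (hGx4 : eval ![(-1:ℝ), 1] (pderiv 0 v) = 0)
    (hGy1 : eval ![(-1:ℝ), -1] (pderiv 1 v) = 0)
    (hGy2 : eval ![(1:ℝ), -1] (pderiv 1 v) = 0)
    (hGy3 : eval ![(1:ℝ), 1] (pderiv 1 v) = 0)
    (hGy4 : eval ![(-1:ℝ), 1] (pderiv 1 v) = 0)
    (hN1 : (∫ x in (-1:ℝ)..1, eval ![x, -1] (pderiv 1 v)) = 0)
    (hN2 : (∫ x in (-1:ℝ)..1, eval ![x, 1] (pderiv 1 v)) = 0)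
    (hN3 : (∫ y in (-1:ℝ)..1, eval ![(-1:ℝ), y] (pderiv 0 v)) = 0)
    (hN4 : (∫ y in (-1:ℝ)..1, eval ![(1:ℝ), y] (pderiv 0 v)) = 0)
    (hM1 : (∫ x in (-1:ℝ)..1, eval ![x, -1] (pderiv 1 v) * x) = 0)
    (hM2 : (∫ x in (-1:ℝ)..1, eval ![x, 1] (pderiv 1 v) * x) = 0)
    (hM3 : (∫ y in (-1:ℝ)..1, eval ![(-1:ℝ), y] (pderiv 0 v) * y) = 0)
    (hM4 : (∫ y in (-1:ℝ)..1, eval ![(1:ℝ), y] (pderiv 0 v) * y) = 0) :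
    v = 0 := by
  obtain ⟨p, c1, c2, d1, d2, d3, d4, d5, d6, d7, d8, hdeg, hveq⟩ := hv
  obtain ⟨a00, a10, a01, a20, a11, a02, a30, a21, a12, a03, hp⟩ := decomp3 p hdeg
  rw [hp] at hveq
  rw [hveq] at hV1 hV2 hV3 hV4 hGx1 hGx2 hGx3 hGx4 hGy1 hGy2 hGy3 hGy4
  simp only [bub, map_add, map_sub, map_mul, map_pow, map_one, pderiv_mul, pderiv_pow,
        pderiv_C, pderiv_one, pderiv_X_self,
        pderiv_X_of_ne (show (0:Fin 2) ≠ 1 by decide), pderiv_X_of_ne (show (1:Fin 2) ≠ 0 by decide),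
        nsmul_eq_mul, Nat.cast_ofNat, eval_C, eval_X, map_natCast, map_nsmul, smul_eq_mul, map_zero, map_ofNat,
        Matrix.cons_val_zero, Matrix.cons_val_one, Matrix.head_cons] at hV1 hV2 hV3 hV4 hGx1 hGx2 hGx3 hGx4 hGy1 hGy2 hGy3 hGy4
  norm_num at hV1 hV2 hV3 hV4 hGx1 hGx2 hGx3 hGx4 hGy1 hGy2 hGy3 hGy4
  have hP1 : ∀ x : ℝ, eval ![x, (-1:ℝ)] (pderiv 1 v) = (a01 + (-2:ℝ) * a02 + (3:ℝ) * a03 + (-2:ℝ) * d2 + (2:ℝ) * d6) + (a11 + (-2:ℝ) * a12 + (3:ℝ) * c2 + (2:ℝ) * d1 + (2:ℝ) * d4 + (-2:ℝ) * d8) * x + (a21 + (2:ℝ) * d2 + (-2:ℝ) * d3 + (-2:ℝ) * d6) * x^2 + (c1 + (-2:ℝ) * d1 + (-2:ℝ) * d4 + (-2:ℝ) * d7 + (2:ℝ) * d8) * x^3 + ((2:ℝ) * d3 + (2:ℝ) * d5) * x^4 + ((2:ℝ) * d7) * x^5 + ((-2:ℝ) * d5) * x^6 + ((0:ℝ)) *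 x^7 := by
    intro x
    rw [hveq]
    simp only [bub, map_add, map_sub, map_mul, map_pow, map_one, pderiv_mul, pderiv_pow,
          pderiv_C, pderiv_one, pderiv_X_self,
          pderiv_X_of_ne (show (0:Fin 2) ≠ 1 by decide), pderiv_X_of_ne (show (1:Fin 2) ≠ 0 by decide),
          nsmul_eq_mul, Nat.cast_ofNat, eval_C, eval_X, map_natCast, map_nsmul, smul_eq_mul, map_zero, map_ofNat,
          Matrix.cons_val_zero, Matrix.cons_val_one, Matrix.head_cons]
    ring
  have hP1m : ∀ x : ℝ, eval ![x, (-1:ℝ)] (pderiv 1 v) * x = (0:ℝ) + (a01 + (-2:ℝ) * a02 + (3:ℝ) * a03 + (-2:ℝ) * d2 + (2:ℝ) * d6) * x + (a11 + (-2:ℝ) * a12 + (3:ℝ) * c2 + (2:ℝ) * d1 + (2:ℝ) * d4 + (-2:ℝ) * d8) * x^2 + (a21 + (2:ℝ) * d2 + (-2:ℝ) * d3 + (-2:ℝ) * d6) * x^3 + (c1 + (-2:ℝ) * d1 + (-2:ℝ) * d4 + (-2:ℝ) * d7 + (2:ℝ) * d8) * x^4 + ((2:ℝ) * d3 + (2:ℝ)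 * d5) * x^5 + ((2:ℝ) * d7) * x^6 + ((-2:ℝ) * d5) * x^7 := by
    intro x; rw [hP1]; ring
  simp only [hP1m] at hM1
  simp only [hP1] at hN1
  rw [intpoly] at hN1 hM1
  have hP2 : ∀ x : ℝ, eval ![x, (1:ℝ)] (pderiv 1 v) = (a01 + (2:ℝ) * a02 + (3:ℝ) * a03 + (-2:ℝ) * d2 + (-2:ℝ) * d6) + (a11 + (2:ℝ) * a12 + (3:ℝ) * c2 + (-2:ℝ) * d1 + (-2:ℝ) * d4 + (-2:ℝ) * d8) * x + (a21 + (2:ℝ) * d2 + (-2:ℝ) * d3 + (2:ℝ) * d6) * x^2 + (c1 + (2:ℝ) * d1 + (2:ℝ) * d4 + (-2:ℝ) * d7 + (2:ℝ) * d8) * x^3 + ((2:ℝ) * d3 + (-2:ℝ) * d5) * x^4 + ((2:ℝ) * d7) * x^5 + ((2:ℝ) * d5) * x^6 + ((0:ℝ)) * x^7 := by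
    intro x
    rw [hveq]
    simp only [bub, map_add, map_sub, map_mul, map_pow, map_one, pderiv_mul, pderiv_pow,
          pderiv_C, pderiv_one, pderiv_X_self,
          pderiv_X_of_ne (show (0:Fin 2) ≠ 1 by decide), pderiv_X_of_ne (show (1:Fin 2) ≠ 0 by decide),
          nsmul_eq_mul, Nat.cast_ofNat, eval_C, eval_X, map_natCast, map_nsmul, smul_eq_mul, map_zero, map_ofNat,
          Matrix.cons_val_zero, Matrix.cons_val_one, Matrix.head_cons]
    ring
  have hP2m : ∀ x : ℝ, eval ![x, (1:ℝ)] (pderiv 1 v) * x = (0:ℝ) + (a01 + (2:ℝ) * a02 + (3:ℝ) * a03 + (-2:ℝ) * d2 + (-2:ℝ) * d6) * x + (a11 + (2:ℝ) * a12 + (3:ℝ) * c2 + (-2:ℝ) * d1 + (-2:ℝ) * d4 + (-2:ℝ) * d8) * x^2 + (a21 + (2:ℝ) * d2 + (-2:ℝ) * d3 + (2:ℝ) * d6) * x^3 + (c1 + (2:ℝ) * d1 + (2:ℝ) * d4 + (-2:ℝ) * d7 + (2:ℝ) * d8) * x^4 + ((2:ℝ) * d3 + (-2:ℝ) * d5)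 * x^5 + ((2:ℝ) * d7) * x^6 + ((2:ℝ) * d5) * x^7 := by
    intro x; rw [hP2]; ring
  simp only [hP2m] at hM2
  simp only [hP2] at hN2
  rw [intpoly] at hN2 hM2
  have hP3 : ∀ y : ℝ, eval ![(-1:ℝ), y] (pderiv 0 v) = (a10 + (-2:ℝ) * a20 + (3:ℝ) * a30 + (-2:ℝ) * d1 + (2:ℝ) * d5) + (a11 + (-2:ℝ) * a21 + (3:ℝ) * c1 + (2:ℝ) * d2 + (2:ℝ) * d3 + (-2:ℝ) * d7) * y + (a12 + (2:ℝ) * d1 + (-2:ℝ) * d4 + (-2:ℝ) * d5) * y^2 + (c2 + (-2:ℝ) * d2 + (-2:ℝ) * d3 + (2:ℝ) * d7 + (-2:ℝ) * d8) * y^3 + ((2:ℝ) * d4 + (2:ℝ) * d6) * y^4 + ((2:ℝ) * d8) * y^5 + ((-2:ℝ) * d6) * y^6 + ((0:ℝ)) * y^7 := by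
    intro y
    rw [hveq]
    simp only [bub, map_add, map_sub, map_mul, map_pow, map_one, pderiv_mul, pderiv_pow,
          pderiv_C, pderiv_one, pderiv_X_self,
          pderiv_X_of_ne (show (0:Fin 2) ≠ 1 by decide), pderiv_X_of_ne (show (1:Fin 2) ≠ 0 by decide),
          nsmul_eq_mul, Nat.cast_ofNat, eval_C, eval_X, map_natCast, map_nsmul, smul_eq_mul, map_zero, map_ofNat,
          Matrix.cons_val_zero, Matrix.cons_val_one, Matrix.head_cons]
    ring
  have hP3m : ∀ y : ℝ, eval ![(-1:ℝ), y] (pderiv 0 v) * y = (0:ℝ) + (a10 + (-2:ℝ) * a20 + (3:ℝ) * a30 + (-2:ℝ) * d1 + (2:ℝ) * d5) * y + (a11 + (-2:ℝ) * a21 + (3:ℝ) * c1 + (2:ℝ) * d2 + (2:ℝ) * d3 + (-2:ℝ) * d7) * y^2 + (a12 + (2:ℝ) * d1 + (-2:ℝ) * d4 + (-2:ℝ) * d5) * y^3 + (c2 + (-2:ℝ) * d2 + (-2:ℝ) * d3 + (2:ℝ) * d7 + (-2:ℝ) * d8) * y^4 + ((2:ℝ) * d4 + (2:ℝ) * d6)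 * y^5 + ((2:ℝ) * d8) * y^6 + ((-2:ℝ) * d6) * y^7 := by
    intro y; rw [hP3]; ring
  simp only [hP3m] at hM3
  simp only [hP3] at hN3
  rw [intpoly] at hN3 hM3
  have hP4 : ∀ y : ℝ, eval ![(1:ℝ), y] (pderiv 0 v) = (a10 + (2:ℝ) * a20 + (3:ℝ) * a30 + (-2:ℝ) * d1 + (-2:ℝ) * d5) + (a11 + (2:ℝ) * a21 + (3:ℝ) * c1 + (-2:ℝ) * d2 + (-2:ℝ) * d3 + (-2:ℝ) * d7) * y + (a12 + (2:ℝ) * d1 + (-2:ℝ) * d4 + (2:ℝ) * d5) * y^2 + (c2 + (2:ℝ) * d2 + (2:ℝ) * d3 + (2:ℝ) * d7 + (-2:ℝ) * d8) * y^3 + ((2:ℝ) * d4 + (-2:ℝ) * d6) * y^4 + ((2:ℝ) * d8) * y^5 + ((2:ℝ) * d6) * y^6 + ((0:ℝ)) * y^7 := by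
    intro y
    rw [hveq]
    simp only [bub, map_add, map_sub, map_mul, map_pow, map_one, pderiv_mul, pderiv_pow,
          pderiv_C, pderiv_one, pderiv_X_self,
          pderiv_X_of_ne (show (0:Fin 2) ≠ 1 by decide), pderiv_X_of_ne (show (1:Fin 2) ≠ 0 by decide),
          nsmul_eq_mul, Nat.cast_ofNat, eval_C, eval_X, map_natCast, map_nsmul, smul_eq_mul, map_zero, map_ofNat,
          Matrix.cons_val_zero, Matrix.cons_val_one, Matrix.head_cons]
    ring
  have hP4m : ∀ y : ℝ, eval ![(1:ℝ), y] (pderiv 0 v) * y = (0:ℝ) + (a10 + (2:ℝ) * a20 + (3:ℝ) * a30 + (-2:ℝ) * d1 + (-2:ℝ) * d5) * y + (a11 + (2:ℝ) * a21 + (3:ℝ) * c1 + (-2:ℝ) * d2 + (-2:ℝ) * d3 + (-2:ℝ) * d7) * y^2 + (a12 + (2:ℝ) * d1 + (-2:ℝ) * d4 + (2:ℝ) * d5) * y^3 + (c2 + (2:ℝ) * d2 + (2:ℝ) * d3 + (2:ℝ) * d7 + (-2:ℝ) * d8) * y^4 + ((2:ℝ) * d4 + (-2:ℝ) * d6) *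 y^5 + ((2:ℝ) * d8) * y^6 + ((2:ℝ) * d6) * y^7 := by
    intro y; rw [hP4]; ring
  simp only [hP4m] at hM4
  simp only [hP4] at hN4
  rw [intpoly] at hN4 hM4
  have ha00 : a00 = 0 := by
    linear_combination ((1:ℝ)/4) * hV1 + ((1:ℝ)/4) * hV2 + ((1:ℝ)/4) * hV3 + ((1:ℝ)/4) * hV4 + ((1:ℝ)/8) * hGx1 + ((-1:ℝ)/8) * hGx2 + ((-1:ℝ)/8) * hGx3 + ((1:ℝ)/8) * hGx4 + ((1:ℝ)/8) * hGy1 + ((1:ℝ)/8) * hGy2 + ((-1:ℝ)/8) * hGy3 + ((-1:ℝ)/8) * hGy4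
  have ha10 : a10 = 0 := by
    linear_combination ((-3:ℝ)/8) * hV1 + ((3:ℝ)/8) * hV2 + ((3:ℝ)/8) * hV3 + ((-3:ℝ)/8) * hV4 + ((-1:ℝ)/8) * hGx1 + ((-1:ℝ)/8) * hGx2 + ((-1:ℝ)/8) * hGx3 + ((-1:ℝ)/8) * hGx4 + ((-1:ℝ)/8) * hGy1 + ((1:ℝ)/8) * hGy2 + ((-1:ℝ)/8) * hGy3 + ((1:ℝ)/8) * hGy4
  have ha01 : a01 = 0 := by
    linear_combination ((-3:ℝ)/8) * hV1 + ((-3:ℝ)/8) * hV2 + ((3:ℝ)/8) * hV3 + ((3:ℝ)/8) * hV4 + ((-1:ℝ)/8) * hGx1 + ((1:ℝ)/8) * hGx2 + ((-1:ℝ)/8) * hGx3 + ((1:ℝ)/8) * hGx4 + ((-1:ℝ)/8) * hGy1 + ((-1:ℝ)/8) * hGy2 + ((-1:ℝ)/8) * hGy3 + ((-1:ℝ)/8) * hGy4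
  have ha20 : a20 = 0 := by
    linear_combination ((-1:ℝ)/8) * hGx1 + ((1:ℝ)/8) * hGx2 + ((1:ℝ)/8) * hGx3 + ((-1:ℝ)/8) * hGx4
  have ha11 : a11 = 0 := by
    linear_combination ((1:ℝ)/2) * hV1 + ((-1:ℝ)/2) * hV2 + ((1:ℝ)/2) * hV3 + ((-1:ℝ)/2) * hV4 + ((1:ℝ)/8) * hGx1 + ((1:ℝ)/8) * hGx2 + ((-1:ℝ)/8) * hGx3 + ((-1:ℝ)/8) * hGx4 + ((1:ℝ)/8) * hGy1 + ((-1:ℝ)/8) * hGy2 + ((-1:ℝ)/8) * hGy3 + ((1:ℝ)/8) * hGy4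
  have ha02 : a02 = 0 := by
    linear_combination ((-1:ℝ)/8) * hGy1 + ((-1:ℝ)/8) * hGy2 + ((1:ℝ)/8) * hGy3 + ((1:ℝ)/8) * hGy4
  have ha30 : a30 = 0 := by
    linear_combination ((1:ℝ)/8) * hV1 + ((-1:ℝ)/8) * hV2 + ((-1:ℝ)/8) * hV3 + ((1:ℝ)/8) * hV4 + ((1:ℝ)/8) * hGx1 + ((1:ℝ)/8) * hGx2 + ((1:ℝ)/8) * hGx3 + ((1:ℝ)/8) * hGx4
  have ha21 : a21 = 0 := by
    linear_combination ((1:ℝ)/8) * hGx1 + ((-1:ℝ)/8) * hGx2 + ((1:ℝ)/8) * hGx3 + ((-1:ℝ)/8) * hGx4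
  have ha12 : a12 = 0 := by
    linear_combination ((1:ℝ)/8) * hGy1 + ((-1:ℝ)/8) * hGy2 + ((1:ℝ)/8) * hGy3 + ((-1:ℝ)/8) * hGy4
  have ha03 : a03 = 0 := by
    linear_combination ((1:ℝ)/8) * hV1 + ((1:ℝ)/8) * hV2 + ((-1:ℝ)/8) * hV3 + ((-1:ℝ)/8) * hV4 + ((1:ℝ)/8) * hGy1 + ((1:ℝ)/8) * hGy2 + ((1:ℝ)/8) * hGy3 + ((1:ℝ)/8) * hGy4
  have hc1 : c1 = 0 := by
    linear_combination ((-1:ℝ)/8) * hV1 + ((1:ℝ)/8) * hV2 + ((-1:ℝ)/8) * hV3 + ((1:ℝ)/8) * hV4 + ((-1:ℝ)/8) * hGx1 + ((-1:ℝ)/8) * hGx2 + ((1:ℝ)/8) * hGx3 + ((1:ℝ)/8) * hGx4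
  have hc2 : c2 = 0 := by
    linear_combination ((-1:ℝ)/8) * hV1 + ((1:ℝ)/8) * hV2 + ((-1:ℝ)/8) * hV3 + ((1:ℝ)/8) * hV4 + ((-1:ℝ)/8) * hGy1 + ((1:ℝ)/8) * hGy2 + ((1:ℝ)/8) * hGy3 + ((-1:ℝ)/8) * hGy4
  have hd1 : d1 = 0 := by
    linear_combination ((15:ℝ)/64) * hGx1 + ((15:ℝ)/64) * hGx2 + ((15:ℝ)/64) * hGx3 + ((15:ℝ)/64) * hGx4 + ((-5:ℝ)/32) * hGy1 + ((5:ℝ)/32) * hGy2 + ((-5:ℝ)/32) * hGy3 + ((5:ℝ)/32) * hGy4 + ((-15:ℝ)/64) * hN3 + ((-15:ℝ)/64) * hN4 + ((-15:ℝ)/64) * hM1 + ((15:ℝ)/64) * hM2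
  have hd2 : d2 = 0 := by
    linear_combination ((-5:ℝ)/32) * hGx1 + ((5:ℝ)/32) * hGx2 + ((-5:ℝ)/32) * hGx3 + ((5:ℝ)/32) * hGx4 + ((15:ℝ)/64) * hGy1 + ((15:ℝ)/64) * hGy2 + ((15:ℝ)/64) * hGy3 + ((15:ℝ)/64) * hGy4 + ((-15:ℝ)/64) * hN1 + ((-15:ℝ)/64) * hN2 + ((-15:ℝ)/64) * hM3 + ((15:ℝ)/64) * hM4
  have hd3 : d3 = 0 := by
    linear_combination ((15:ℝ)/32) * hGx1 + ((-15:ℝ)/32) * hGx2 + ((15:ℝ)/32) * hGx3 + ((-15:ℝ)/32) * hGx4 + ((-15:ℝ)/64) * hGy1 + ((-15:ℝ)/64) * hGy2 + ((-15:ℝ)/64) * hGy3 + ((-15:ℝ)/64) * hGy4 + ((15:ℝ)/64) * hN1 + ((15:ℝ)/64) * hN2 + ((75:ℝ)/64) * hM3 + ((-75:ℝ)/64) * hM4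
  have hd4 : d4 = 0 := by
    linear_combination ((-15:ℝ)/64) * hGx1 + ((-15:ℝ)/64) * hGx2 + ((-15:ℝ)/64) * hGx3 + ((-15:ℝ)/64) * hGx4 + ((15:ℝ)/32) * hGy1 + ((-15:ℝ)/32) * hGy2 + ((15:ℝ)/32) * hGy3 + ((-15:ℝ)/32) * hGy4 + ((15:ℝ)/64) * hN3 + ((15:ℝ)/64) * hN4 + ((75:ℝ)/64) * hM1 + ((-75:ℝ)/64) * hM2
  have hd5 : d5 = 0 := by
    linear_combination ((-3675:ℝ)/19456) * hGx1 + ((3675:ℝ)/19456) * hGx2 + ((3675:ℝ)/19456) * hGx3 + ((-3675:ℝ)/19456) * hGx4 + ((315:ℝ)/19456) * hGy1 + ((315:ℝ)/19456) * hGy2 + ((-315:ℝ)/19456) * hGy3 + ((-315:ℝ)/19456) * hGy4 + ((-315:ℝ)/19456) * hN1 + ((315:ℝ)/19456) * hN2 + ((3675:ℝ)/19456) * hN3 + ((-3675:ℝ)/19456) * hN4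
  have hd6 : d6 = 0 := by
    linear_combination ((315:ℝ)/19456) * hGx1 + ((-315:ℝ)/19456) * hGx2 + ((-315:ℝ)/19456) * hGx3 + ((315:ℝ)/19456) * hGx4 + ((-3675:ℝ)/19456) * hGy1 + ((-3675:ℝ)/19456) * hGy2 + ((3675:ℝ)/19456) * hGy3 + ((3675:ℝ)/19456) * hGy4 + ((3675:ℝ)/19456) * hN1 + ((-3675:ℝ)/19456) * hN2 + ((-315:ℝ)/19456) * hN3 + ((315:ℝ)/19456) * hN4
  have hd7 : d7 = 0 := by
    linear_combination ((7:ℝ)/160) * hV1 + ((-7:ℝ)/160) * hV2 + ((7:ℝ)/160) * hV3 + ((-7:ℝ)/160) * hV4 + ((-133:ℝ)/320) * hGx1 + ((-133:ℝ)/320) * hGx2 + ((133:ℝ)/320) * hGx3 + ((133:ℝ)/320) * hGx4 + ((77:ℝ)/320) * hGy1 + ((-77:ℝ)/320) * hGy2 + ((-77:ℝ)/320) * hGy3 + ((77:ℝ)/320) * hGy4 + ((63:ℝ)/128) * hM1 + ((63:ℝ)/128) * hM2 + ((-147:ℝ)/128) * hM3 + ((-147:ℝ)/128) * hM4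
  have hd8 : d8 = 0 := by
    linear_combination ((7:ℝ)/160) * hV1 + ((-7:ℝ)/160) * hV2 + ((7:ℝ)/160) * hV3 + ((-7:ℝ)/160) * hV4 + ((77:ℝ)/320) * hGx1 + ((77:ℝ)/320) * hGx2 + ((-77:ℝ)/320) * hGx3 + ((-77:ℝ)/320) * hGx4 + ((-133:ℝ)/320) * hGy1 + ((133:ℝ)/320) * hGy2 + ((133:ℝ)/320) * hGy3 + ((-133:ℝ)/320) * hGy4 + ((-147:ℝ)/128) * hM1 + ((-147:ℝ)/128) * hM2 + ((63:ℝ)/128) * hM3 + ((63:ℝ)/128) * hM4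
  subst ha00
  subst ha10
  subst ha01
  subst ha20
  subst ha11
  subst ha02
  subst ha30
  subst ha21
  subst ha12
  subst ha03
  subst hc1
  subst hc2
  subst hd1
  subst hd2
  subst hd3
  subst hd4
  subst hd5
  subst hd6
  subst hd7
  subst hd8
  rw [hveq]
  simp
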